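/- For every fixed positive integer k, A_μ = A_{μ^{*k}}; that is, g satisfies lim_n μ^{*n}(g)/μ^{*n}(e) = 1 if and only if lim_n (μ^{*k})^{*n}(g)/(μ^{*k})^{*n}(e) = lim_n μ^{*kn}(g)/μ^{*kn}(e) = 1. -/

import Mathlib

open Filter Topology
open scoped Classical

/-- Convolution of two real-valued functions on a discrete group. -/
noncomputable def conv {G : Type*} [Group G] (μ τ : G → ℝ) : G → ℝ :=
  fun y => ∑' x : G, μ x * τ (x⁻¹ * y)

/-- `n`-fold convolution power, with `μ^{*0}` the Dirac mass at the identity. -/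
noncomputable def convPow {G : Type*} [Group G] (μ : G → ℝ) : ℕ → G → ℝ
  | 0 => fun x => if x = 1 then 1 else 0
  | n + 1 => conv (convPow μ n) μ

/-- `μ` is a probability measure on the discrete group `G`. -/
def IsProb {G : Type*} [Group G] (μ : G → ℝ) : Prop :=
  (∀ x, 0 ≤ μ x) ∧ ∑' x : G, μ x = 1

/-- `μ` is symmetric. -/
def MeasSymm {G : Type*} [Group G] (μ : G → ℝ) : Prop := ∀ x, μ x⁻¹ = μ x

/-- `μ` is aperiodic: `gcd { n ≥ 1 | μ^{*n}(e) > 0 } = 1`. -/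
def IsAperiodic {G : Type*} [Group G] (μ : G → ℝ) : Prop :=
  ∀ d : ℕ, (∀ n : ℕ, 1 ≤ n → 0 < convPow μ n 1 → d ∣ n) → d = 1

/-- The support of `μ` generates `G`. -/
def GeneratingSupport {G : Type*} [Group G] (μ : G → ℝ) : Prop :=
  Subgroup.closure {x : G | 0 < μ x} = ⊤

/-- The set `A_μ = { g | μ^{*n}(g)/μ^{*n}(e) → 1 }`. -/
def Amu {G : Type*} [Group G] (μ : G → ℝ) : Set G :=
  {g | Tendsto (fun n => convPow μ n g / convPow μ n 1) atTop (𝓝 1)}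

/-- ℓ² inner product. -/
noncomputable def l2inner {G : Type*} (f h : G → ℝ) : ℝ := ∑' x : G, f x * h x

/-- ℓ² norm. -/
noncomputable def l2norm {G : Type*} (f : G → ℝ) : ℝ :=
  Real.sqrt (∑' x : G, (f x) ^ 2)

/-- Left translation: `(g · f)(x) = f (g⁻¹ x)`. -/
def ltrans {G : Type*} [Group G] (g : G) (f : G → ℝ) : G → ℝ := fun x => f (g⁻¹ * x)

/-- The normalized convolution powers `ξ_n = μ^{*n}/‖μ^{*n}‖₂`. -/
noncomputable def xi {G : Type*} [Group G] (μ : G → ℝ) (n : ℕ) : G → ℝ :=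
  fun x => convPow μ n x / l2norm (convPow μ n)

/-- Reiter-type characterization of amenability: a sequence of almost-invariant
unit vectors in `ℓ²(K)`. -/
def ReiterAmenable (K : Type*) [Group K] : Prop :=
  ∃ ψ : ℕ → K → ℝ, (∀ n, ∑' x : K, (ψ n x) ^ 2 = 1) ∧
    ∀ k : K, Tendsto
      (fun n => Real.sqrt (∑' x : K, (ψ n (k⁻¹ * x) - ψ n x) ^ 2)) atTop (𝓝 0)


section CS

variable {G : Type*}

/-- Cauchy–Schwarz for `tsum`. -/
lemma tsum_abs_inner_le (f h : G → ℝ) (hf : Summable (fun x => f x ^ 2))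
    (hh : Summable (fun x => h x ^ 2)) :
    |∑' x, f x * h x| ≤ Real.sqrt (∑' x, f x ^ 2) * Real.sqrt (∑' x, h x ^ 2) := by
  have hs : Summable (fun x => f x * h x) := by
    apply Summable.of_abs
    apply Summable.of_nonneg_of_le (fun x => abs_nonneg _)
      (fun x => ?_) ((hf.add hh).div_const 2)
    rw [abs_mul]
    nlinarith [sq_nonneg (|f x| - |h x|), sq_abs (f x), sq_abs (h x)]
  have key : ∀ s : Finset G, |∑ x ∈ s, f x * h x| ≤
      Real.sqrt (∑' x, f x ^ 2) * Real.sqrt (∑' x, h x ^ 2) := by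
    intro s
    rw [← Real.sqrt_mul (tsum_nonneg fun x => sq_nonneg _), ← Real.sqrt_sq_eq_abs]
    apply Real.sqrt_le_sqrt
    calc (∑ x ∈ s, f x * h x) ^ 2 ≤ (∑ x ∈ s, f x ^ 2) * ∑ x ∈ s, h x ^ 2 :=
          Finset.sum_mul_sq_le_sq_mul_sq s f h
      _ ≤ (∑' x, f x ^ 2) * ∑' x, h x ^ 2 := by
          apply mul_le_mul (Summable.sum_le_tsum s (fun i _ => sq_nonneg _) hf)
            (Summable.sum_le_tsum s (fun i _ => sq_nonneg _) hh)
            (Finset.sum_nonneg fun i _ => sq_nonneg _)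
            (tsum_nonneg fun x => sq_nonneg _)
  exact le_of_tendsto ((continuous_abs.tendsto _).comp hs.hasSum) (Eventually.of_forall key)

lemma tsum_inner_sq_le (f h : G → ℝ) (hf : Summable (fun x => f x ^ 2))
    (hh : Summable (fun x => h x ^ 2)) :
    (∑' x, f x * h x) ^ 2 ≤ (∑' x, f x ^ 2) * (∑' x, h x ^ 2) := by
  have := tsum_abs_inner_le f h hf hh
  have h1 : 0 ≤ Real.sqrt (∑' x, f x ^ 2) * Real.sqrt (∑' x, h x ^ 2) :=
    mul_nonneg (Real.sqrt_nonneg _) (Real.sqrt_nonneg _)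
  calc (∑' x, f x * h x) ^ 2 = |∑' x, f x * h x| ^ 2 := (sq_abs _).symm
    _ ≤ (Real.sqrt (∑' x, f x ^ 2) * Real.sqrt (∑' x, h x ^ 2)) ^ 2 := by
        apply pow_le_pow_left₀ (abs_nonneg _) this
    _ = (∑' x, f x ^ 2) * (∑' x, h x ^ 2) := by
        rw [mul_pow, Real.sq_sqrt (tsum_nonneg fun x => sq_nonneg _),
          Real.sq_sqrt (tsum_nonneg fun x => sq_nonneg _)]

/-- Weighted Cauchy–Schwarz. -/
lemma tsum_weighted_cs (a w : G → ℝ) (hw : ∀ x, 0 ≤ w x) (h1 : Summable w)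
    (h2 : Summable (fun x => a x ^ 2 * w x)) :
    (∑' x, a x * w x) ^ 2 ≤ (∑' x, a x ^ 2 * w x) * ∑' x, w x := by
  have key := tsum_inner_sq_le (fun x => a x * Real.sqrt (w x)) (fun x => Real.sqrt (w x))
    (by simpa only [mul_pow, Real.sq_sqrt (hw _)] using h2)
    (by simpa only [Real.sq_sqrt (hw _)] using h1)
  simpa only [mul_assoc, Real.mul_self_sqrt (hw _), mul_pow, Real.sq_sqrt (hw _)] using key
end CS


section Conv
variable {G : Type*} [Group G]

/-- The shear equivalence `(x, w) ↦ (x * w, x)`. -/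
def shearEquiv (G : Type*) [Group G] : G × G ≃ G × G where
  toFun p := (p.1 * p.2, p.1)
  invFun q := (q.2, q.2⁻¹ * q.1)
  left_inv p := by simp
  right_inv q := by simp

lemma conv_hasSum {f g : G → ℝ} (hf0 : ∀ x, 0 ≤ f x) (hg0 : ∀ x, 0 ≤ g x)
    (hfs : Summable f) (hgs : Summable g) :
    HasSum (conv f g) ((∑' x, f x) * (∑' x, g x)) := by
  have hFS : Summable (fun p : G × G => f p.2 * g (p.2⁻¹ * p.1)) := by
    rw [← (shearEquiv G).summable_iff]
    have : ((fun p : G × G => f p.2 * g (p.2⁻¹ * p.1)) ∘ (shearEquiv G)) =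
        fun q : G × G => f q.1 * g q.2 := by
      funext q; simp [shearEquiv]
    rw [this]
    exact hfs.mul_of_nonneg hgs hf0 hg0
  have hmarg : ∀ y, HasSum (fun x => f x * g (x⁻¹ * y)) (conv f g y) :=
    fun y => (hFS.prod_factor y).hasSum
  have htot : HasSum (conv f g) (∑' p : G × G, f p.2 * g (p.2⁻¹ * p.1)) :=
    HasSum.prod_fiberwise hFS.hasSum hmarg
  convert htot using 1
  rw [← (shearEquiv G).tsum_eq (fun p : G × G => f p.2 * g (p.2⁻¹ * p.1))]
  have : ∀ q : G × G, f (shearEquiv G q).2 * g ((shearEquiv G q).2⁻¹ * (shearEquiv G q).1) =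
      f q.1 * g q.2 := by intro q; simp [shearEquiv]
  rw [tsum_congr this]
  have hS2 : Summable (fun q : G × G => f q.1 * g q.2) := hfs.mul_of_nonneg hgs hf0 hg0
  have e1 : ∑' (q : G × G), f q.1 * g q.2 = ∑' (b : G), ∑' (c : G), f b * g c :=
    Summable.tsum_prod' hS2 hS2.prod_factor
  rw [e1, tsum_congr (fun b => (tsum_mul_left : ∑' (c : G), f b * g c = f b * ∑' (c : G), g c)),
    tsum_mul_right]

lemma conv_nonneg {f g : G → ℝ} (hf0 : ∀ x, 0 ≤ f x) (hg0 : ∀ x, 0 ≤ g x) (y : G) :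
    0 ≤ conv f g y := tsum_nonneg fun x => mul_nonneg (hf0 x) (hg0 _)

lemma conv_assoc {f g h : G → ℝ} (hf0 : ∀ x, 0 ≤ f x) (hg0 : ∀ x, 0 ≤ g x)
    (hh0 : ∀ x, 0 ≤ h x) (hfs : Summable f) (hgs : Summable g) (hhb : ∀ x, h x ≤ 1) :
    conv (conv f g) h = conv f (conv g h) := by
  funext y
  set F : G × G → ℝ := fun p => f p.2 * g (p.2⁻¹ * p.1) * h (p.1⁻¹ * y) with hF
  have hFe : ∀ q : G × G, F (shearEquiv G q) = f q.1 * (g q.2 * h (q.2⁻¹ * (q.1⁻¹ * y))) := by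
    intro q
    simp only [hF, shearEquiv, Equiv.coe_fn_mk]
    rw [inv_mul_cancel_left, mul_inv_rev, mul_assoc, mul_assoc]
  have hS2 : Summable (fun q : G × G => f q.1 * g q.2) := hfs.mul_of_nonneg hgs hf0 hg0
  have hFeS : Summable (F ∘ shearEquiv G) := by
    apply Summable.of_nonneg_of_le (fun q => ?_) (fun q => ?_) hS2
    · simp only [Function.comp_apply, hFe]
      exact mul_nonneg (hf0 _) (mul_nonneg (hg0 _) (hh0 _))
    · simp only [Function.comp_apply, hFe]
      calc f q.1 * (g q.2 * h (q.2⁻¹ * (q.1⁻¹ * y))) ≤ f q.1 * (g q.2 * 1) := by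
            apply mul_le_mul_of_nonneg_left _ (hf0 _)
            exact mul_le_mul_of_nonneg_left (hhb _) (hg0 _)
        _ = f q.1 * g q.2 := by ring
  have hFS : Summable F := (shearEquiv G).summable_iff.mp hFeS
  calc conv (conv f g) h y = ∑' x, (∑' z, f z * g (z⁻¹ * x)) * h (x⁻¹ * y) := rfl
    _ = ∑' x, ∑' z, F (x, z) := by
        refine tsum_congr fun x => ?_
        exact (tsum_mul_right).symm
    _ = ∑' p : G × G, F p := (Summable.tsum_prod' hFS hFS.prod_factor).symm
    _ = ∑' q : G × G, F (shearEquiv G q) := ((shearEquiv G).tsum_eq F).symm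
    _ = ∑' q : G × G, f q.1 * (g q.2 * h (q.2⁻¹ * (q.1⁻¹ * y))) := tsum_congr hFe
    _ = ∑' z, ∑' w, f z * (g w * h (w⁻¹ * (z⁻¹ * y))) := by
        have : Summable (fun q : G × G => f q.1 * (g q.2 * h (q.2⁻¹ * (q.1⁻¹ * y)))) :=
          hFeS.congr hFe
        exact Summable.tsum_prod' this this.prod_factor
    _ = ∑' z, f z * ∑' w, g w * h (w⁻¹ * (z⁻¹ * y)) := tsum_congr fun z => tsum_mul_left
    _ = conv f (conv g h) y := rfl

end Conv

section ConvPow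
variable {G : Type*} [Group G] {μ : G → ℝ}

lemma IsProb.summable (h : IsProb μ) : Summable μ := by
  by_contra hs
  have := h.2
  rw [tsum_eq_zero_of_not_summable hs] at this
  exact zero_ne_one this

lemma IsProb.le_one (h : IsProb μ) (x : G) : μ x ≤ 1 :=
  h.2 ▸ Summable.le_tsum h.summable x fun j _ => h.1 j

lemma isProb_convPow (h : IsProb μ) (n : ℕ) : IsProb (convPow μ n) := by
  induction n with
  | zero =>
    constructor
    · intro x; dsimp [convPow]; split <;> norm_num
    · exact tsum_ite_eq (1 : G) (fun _ => (1 : ℝ))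
  | succ n ih =>
    have hs := conv_hasSum ih.1 h.1 ih.summable h.summable
    refine ⟨conv_nonneg ih.1 h.1, ?_⟩
    show ∑' x : G, conv (convPow μ n) μ x = 1
    rw [hs.tsum_eq, ih.2, h.2, one_mul]

lemma convPow_nonneg (h : IsProb μ) (n : ℕ) (x : G) : 0 ≤ convPow μ n x :=
  (isProb_convPow h n).1 x

lemma convPow_summable (h : IsProb μ) (n : ℕ) : Summable (convPow μ n) :=
  (isProb_convPow h n).summable

lemma convPow_le_one (h : IsProb μ) (n : ℕ) (x : G) : convPow μ n x ≤ 1 :=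
  (isProb_convPow h n).le_one x

lemma convPow_one_eq (μ : G → ℝ) : convPow μ 1 = μ := by
  funext y
  show ∑' x : G, (if x = 1 then (1:ℝ) else 0) * μ (x⁻¹ * y) = μ y
  rw [tsum_eq_single 1 (fun b hb => by rw [if_neg hb, zero_mul])]
  simp

lemma conv_dirac (f : G → ℝ) : conv f (convPow μ 0) = f := by
  funext y
  show ∑' x : G, f x * (if x⁻¹ * y = 1 then (1:ℝ) else 0) = f y
  rw [tsum_eq_single y (fun b hb => ?_)]
  · simp
  · have : b⁻¹ * y ≠ 1 := fun hc => hb (by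
      have := congrArg (fun z => b * z) hc
      simpa [mul_assoc] using this.symm)
    rw [if_neg this, mul_zero]

lemma convPow_add (h : IsProb μ) (m n : ℕ) :
    convPow μ (m + n) = conv (convPow μ m) (convPow μ n) := by
  induction n with
  | zero => rw [Nat.add_zero, conv_dirac]
  | succ n ih =>
    show convPow μ (m + n + 1) = _
    show conv (convPow μ (m + n)) μ = _
    rw [ih]
    exact conv_assoc (convPow_nonneg h m) (convPow_nonneg h n) h.1
      (convPow_summable h m) (convPow_summable h n) h.le_one

lemma convPow_succ' (h : IsProb μ) (n : ℕ) :
    convPow μ (n + 1) = conv μ (convPow μ n) := by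
  have := convPow_add h 1 n
  rw [Nat.add_comm 1 n, convPow_one_eq] at this
  exact this

lemma convPow_symm (h : IsProb μ) (hsymm : MeasSymm μ) (n : ℕ) :
    MeasSymm (convPow μ n) := by
  induction n with
  | zero => intro x; dsimp [convPow]; simp [inv_eq_one]
  | succ n ih =>
    intro y
    show conv (convPow μ n) μ y⁻¹ = conv (convPow μ n) μ y
    have step1 : conv (convPow μ n) μ y⁻¹ = ∑' x : G, convPow μ n x * μ (y * x) := by
      refine tsum_congr fun x => ?_
      congr 1
      rw [← hsymm (y * x)]
      congr 1
      group
    rw [step1, ← (Equiv.mulLeft y⁻¹).tsum_eq (fun x : G => convPow μ n x * μ (y * x))]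
    have step2 : conv (convPow μ n) μ y = conv μ (convPow μ n) y := by
      rw [← convPow_succ' h n]; rfl
    rw [step2]
    refine tsum_congr fun z => ?_
    show convPow μ n (y⁻¹ * z) * μ (y * (y⁻¹ * z)) = μ z * convPow μ n (z⁻¹ * y)
    rw [mul_inv_cancel_left]
    rw [show convPow μ n (y⁻¹ * z) = convPow μ n (z⁻¹ * y) by
      rw [← ih (z⁻¹ * y)]; congr 1; group]
    ring

lemma convPow_pair (h : IsProb μ) (hsymm : MeasSymm μ) (m n : ℕ) (g : G) :
    ∑' x : G, convPow μ m x * convPow μ n (g⁻¹ * x) = convPow μ (m + n) g := by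
  rw [convPow_add h m n]
  refine tsum_congr fun x => ?_
  congr 1
  rw [← convPow_symm h hsymm n (x⁻¹ * g)]
  congr 1
  group

lemma summable_pair (h : IsProb μ) (m n : ℕ) (g : G) :
    Summable (fun x : G => convPow μ m x * convPow μ n (g⁻¹ * x)) := by
  apply Summable.of_nonneg_of_le
    (fun x => mul_nonneg (convPow_nonneg h m x) (convPow_nonneg h n _))
    (fun x => ?_) (convPow_summable h m)
  calc convPow μ m x * convPow μ n (g⁻¹ * x) ≤ convPow μ m x * 1 :=
        mul_le_mul_of_nonneg_left (convPow_le_one h n _) (convPow_nonneg h m x)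
    _ = convPow μ m x := mul_one _

lemma summable_sq (h : IsProb μ) (n : ℕ) : Summable (fun x : G => convPow μ n x ^ 2) := by
  apply Summable.of_nonneg_of_le (fun x => sq_nonneg _) (fun x => ?_) (convPow_summable h n)
  rw [sq]
  calc convPow μ n x * convPow μ n x ≤ 1 * convPow μ n x :=
        mul_le_mul_of_nonneg_right (convPow_le_one h n x) (convPow_nonneg h n x)
    _ = convPow μ n x := one_mul _

lemma summable_trans_sq (h : IsProb μ) (n : ℕ) (g : G) :
    Summable (fun x : G => convPow μ n (g⁻¹ * x) ^ 2) :=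
  ((Equiv.mulLeft g⁻¹).summable_iff (f := fun x : G => convPow μ n x ^ 2)).mpr (summable_sq h n)

lemma tsum_trans_sq (h : IsProb μ) (n : ℕ) (g : G) :
    ∑' x : G, convPow μ n (g⁻¹ * x) ^ 2 = ∑' x : G, convPow μ n x ^ 2 :=
  (Equiv.mulLeft g⁻¹).tsum_eq (fun x : G => convPow μ n x ^ 2)

lemma E_eq_sq (h : IsProb μ) (hsymm : MeasSymm μ) (n : ℕ) :
    convPow μ (2 * n) 1 = ∑' x : G, convPow μ n x ^ 2 := by
  rw [two_mul, ← convPow_pair h hsymm n n 1]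
  refine (tsum_congr fun x => ?_).symm
  rw [sq]
  congr 1
  rw [inv_one, one_mul]

lemma E_pos (h : IsProb μ) (hsymm : MeasSymm μ) (n : ℕ) : 0 < convPow μ (2 * n) 1 := by
  rw [E_eq_sq h hsymm]
  obtain ⟨x₀, hx₀⟩ : ∃ x, 0 < convPow μ n x := by
    by_contra hc
    push_neg at hc
    have hz : ∀ x, convPow μ n x = (0:ℝ) := fun x => le_antisymm (hc x) (convPow_nonneg h n x)
    have h2 := (isProb_convPow h n).2
    rw [tsum_congr hz] at h2
    simp at h2
  exact Summable.tsum_pos (summable_sq h n) (fun x => sq_nonneg _) x₀ (pow_pos hx₀ 2)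

end ConvPow


section Analytic
variable {G : Type*} [Group G] {μ : G → ℝ}

lemma summable_wtrans (h : IsProb μ) (y : G) : Summable (fun x : G => μ (x⁻¹ * y)) := by
  have := (((Equiv.inv G).trans (Equiv.mulLeft y)).summable_iff
    (f := fun x : G => μ (x⁻¹ * y))).mpr
  apply (((Equiv.inv G).trans (Equiv.mulLeft y)).summable_iff
    (f := fun x : G => μ (x⁻¹ * y))).mp
  have e : ((fun x : G => μ (x⁻¹ * y)) ∘ ((Equiv.inv G).trans (Equiv.mulLeft y))) = μ := by
    funext i
    simp [mul_assoc]
  rw [e]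
  exact h.summable

lemma tsum_wtrans (h : IsProb μ) (y : G) : ∑' x : G, μ (x⁻¹ * y) = 1 := by
  rw [← ((Equiv.inv G).trans (Equiv.mulLeft y)).tsum_eq (fun x : G => μ (x⁻¹ * y))]
  have e : ∀ i : G, μ (((Equiv.inv G).trans (Equiv.mulLeft y) i)⁻¹ * y) = μ i := by
    intro i; simp [mul_assoc]
  rw [tsum_congr e, h.2]

/-- Convolution with a probability measure contracts ℓ². -/
lemma contract (h : IsProb μ) (a : G → ℝ) (hsa : Summable (fun x => a x ^ 2)) :
    Summable (fun y : G => (∑' x : G, a x * μ (x⁻¹ * y)) ^ 2) ∧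
    ∑' y : G, (∑' x : G, a x * μ (x⁻¹ * y)) ^ 2 ≤ ∑' x : G, a x ^ 2 := by
  have hsw : ∀ y : G, Summable (fun x : G => a x ^ 2 * μ (x⁻¹ * y)) := by
    intro y
    apply Summable.of_nonneg_of_le (fun x => mul_nonneg (sq_nonneg _) (h.1 _))
      (fun x => ?_) hsa
    calc a x ^ 2 * μ (x⁻¹ * y) ≤ a x ^ 2 * 1 :=
          mul_le_mul_of_nonneg_left (h.le_one _) (sq_nonneg _)
      _ = a x ^ 2 := mul_one _
  have key : ∀ y : G, (∑' x : G, a x * μ (x⁻¹ * y)) ^ 2 ≤ ∑' x : G, a x ^ 2 * μ (x⁻¹ * y) := by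
    intro y
    have := tsum_weighted_cs a (fun x => μ (x⁻¹ * y)) (fun x => h.1 _)
      (summable_wtrans h y) (hsw y)
    rwa [tsum_wtrans h y, mul_one] at this
  have hconv : HasSum (conv (fun x => a x ^ 2) μ) ((∑' x : G, a x ^ 2) * 1) := by
    have := conv_hasSum (f := fun x => a x ^ 2) (g := μ) (fun x => sq_nonneg _) h.1 hsa h.summable
    rwa [h.2] at this
  have hconv' : ∀ y : G, conv (fun x => a x ^ 2) μ y = ∑' x : G, a x ^ 2 * μ (x⁻¹ * y) := fun y => rfl
  have hsq : Summable (fun y : G => (∑' x : G, a x * μ (x⁻¹ * y)) ^ 2) := by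
    apply Summable.of_nonneg_of_le (fun y => sq_nonneg _) (fun y => (key y).trans_eq (hconv' y).symm)
      hconv.summable
  refine ⟨hsq, ?_⟩
  calc ∑' y : G, (∑' x : G, a x * μ (x⁻¹ * y)) ^ 2
      ≤ ∑' y : G, conv (fun x => a x ^ 2) μ y :=
        Summable.tsum_le_tsum (fun y => (key y).trans_eq (hconv' y).symm) hsq hconv.summable
    _ = (∑' x : G, a x ^ 2) * 1 := hconv.tsum_eq
    _ = ∑' x : G, a x ^ 2 := mul_one _

lemma Dsq_summable (h : IsProb μ) (n : ℕ) (g : G) :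
    Summable (fun x : G => (convPow μ n (g⁻¹ * x) - convPow μ n x) ^ 2) := by
  apply Summable.of_nonneg_of_le (fun x => sq_nonneg _) (fun x => ?_)
    (((summable_trans_sq h n g).mul_left 2).add ((summable_sq h n).mul_left 2))
  nlinarith [sq_nonneg (convPow μ n (g⁻¹ * x) + convPow μ n x)]

lemma Q_eq (h : IsProb μ) (hsymm : MeasSymm μ) (n : ℕ) (g : G) :
    ∑' x : G, (convPow μ n (g⁻¹ * x) - convPow μ n x) ^ 2
      = 2 * convPow μ (2 * n) 1 - 2 * convPow μ (2 * n) g := by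
  have hA := summable_trans_sq h n g
  have hB := summable_sq h n
  have hC : Summable (fun x : G => convPow μ n (g⁻¹ * x) * convPow μ n x) := by
    apply Summable.of_nonneg_of_le
      (fun x => mul_nonneg (convPow_nonneg h n _) (convPow_nonneg h n _))
      (fun x => ?_) (convPow_summable h n)
    calc convPow μ n (g⁻¹ * x) * convPow μ n x ≤ 1 * convPow μ n x :=
          mul_le_mul_of_nonneg_right (convPow_le_one h n _) (convPow_nonneg h n _)
      _ = convPow μ n x := one_mul _
  have e1 : ∀ x : G, (convPow μ n (g⁻¹ * x) - convPow μ n x) ^ 2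
      = convPow μ n (g⁻¹ * x) ^ 2 + (convPow μ n x ^ 2
        - 2 * (convPow μ n (g⁻¹ * x) * convPow μ n x)) := by intro x; ring
  have hCsum : ∑' x : G, convPow μ n (g⁻¹ * x) * convPow μ n x = convPow μ (2 * n) g := by
    rw [tsum_congr (fun x => mul_comm (convPow μ n (g⁻¹ * x)) (convPow μ n x)), two_mul,
      convPow_pair h hsymm n n g]
  rw [tsum_congr e1, Summable.tsum_add hA (hB.sub (hC.mul_left 2)), Summable.tsum_sub hB (hC.mul_left 2),
    tsum_mul_left, tsum_trans_sq h n g, hCsum, ← E_eq_sq h hsymm]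
  ring

lemma diff_conv (h : IsProb μ) (n : ℕ) (g y : G) :
    convPow μ (n + 1) (g⁻¹ * y) - convPow μ (n + 1) y
      = ∑' x : G, (convPow μ n (g⁻¹ * x) - convPow μ n x) * μ (x⁻¹ * y) := by
  have hsA : Summable (fun x : G => convPow μ n (g⁻¹ * x) * μ (x⁻¹ * y)) := by
    apply Summable.of_nonneg_of_le
      (fun x => mul_nonneg (convPow_nonneg h n _) (h.1 _)) (fun x => ?_) (summable_wtrans h y)
    calc convPow μ n (g⁻¹ * x) * μ (x⁻¹ * y) ≤ 1 * μ (x⁻¹ * y) :=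
          mul_le_mul_of_nonneg_right (convPow_le_one h n _) (h.1 _)
      _ = μ (x⁻¹ * y) := one_mul _
  have hsB : Summable (fun x : G => convPow μ n x * μ (x⁻¹ * y)) := by
    apply Summable.of_nonneg_of_le
      (fun x => mul_nonneg (convPow_nonneg h n _) (h.1 _)) (fun x => ?_) (summable_wtrans h y)
    calc convPow μ n x * μ (x⁻¹ * y) ≤ 1 * μ (x⁻¹ * y) :=
          mul_le_mul_of_nonneg_right (convPow_le_one h n _) (h.1 _)
      _ = μ (x⁻¹ * y) := one_mul _
  have h1 : convPow μ (n + 1) (g⁻¹ * y) = ∑' x : G, convPow μ n (g⁻¹ * x) * μ (x⁻¹ * y) := by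
    show conv (convPow μ n) μ (g⁻¹ * y) = _
    show ∑' x : G, convPow μ n x * μ (x⁻¹ * (g⁻¹ * y)) = _
    rw [← (Equiv.mulLeft g⁻¹).tsum_eq (fun x : G => convPow μ n x * μ (x⁻¹ * (g⁻¹ * y)))]
    refine tsum_congr fun z => ?_
    show convPow μ n (g⁻¹ * z) * μ ((g⁻¹ * z)⁻¹ * (g⁻¹ * y)) = _
    congr 2
    group
  have h2 : convPow μ (n + 1) y = ∑' x : G, convPow μ n x * μ (x⁻¹ * y) := rfl
  rw [h1, h2, ← Summable.tsum_sub hsA hsB]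
  exact tsum_congr fun x => (sub_mul _ _ _).symm

lemma Q_succ_le (h : IsProb μ) (n : ℕ) (g : G) :
    ∑' y : G, (convPow μ (n + 1) (g⁻¹ * y) - convPow μ (n + 1) y) ^ 2
      ≤ ∑' x : G, (convPow μ n (g⁻¹ * x) - convPow μ n x) ^ 2 := by
  have e := fun y => diff_conv h n g y
  rw [tsum_congr (fun y => by rw [e y])]
  exact (contract h _ (Dsq_summable h n g)).2

lemma Q_antitone (h : IsProb μ) (g : G) {m n : ℕ} (hmn : m ≤ n) :
    ∑' y : G, (convPow μ n (g⁻¹ * y) - convPow μ n y) ^ 2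
      ≤ ∑' x : G, (convPow μ m (g⁻¹ * x) - convPow μ m x) ^ 2 := by
  induction n, hmn using Nat.le_induction with
  | base => exact le_refl _
  | succ n hn ih => exact (Q_succ_le h n g).trans ih

lemma E_succ_le (h : IsProb μ) (hsymm : MeasSymm μ) (n : ℕ) :
    convPow μ (2 * (n + 1)) 1 ≤ convPow μ (2 * n) 1 := by
  rw [E_eq_sq h hsymm (n + 1), E_eq_sq h hsymm n]
  have e : ∀ y : G, convPow μ (n + 1) y = ∑' x : G, convPow μ n x * μ (x⁻¹ * y) := fun y => rfl
  rw [tsum_congr (fun y => by rw [e y])]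
  exact (contract h _ (summable_sq h n)).2

lemma E_antitone (h : IsProb μ) (hsymm : MeasSymm μ) {m n : ℕ} (hmn : m ≤ n) :
    convPow μ (2 * n) 1 ≤ convPow μ (2 * m) 1 := by
  induction n, hmn using Nat.le_induction with
  | base => exact le_refl _
  | succ n hn ih => exact (E_succ_le h hsymm n).trans ih

lemma E_logconvex (h : IsProb μ) (hsymm : MeasSymm μ) (n : ℕ) :
    convPow μ (2 * (n + 1)) 1 ^ 2 ≤ convPow μ (2 * n) 1 * convPow μ (2 * (n + 2)) 1 := by
  have e1 : convPow μ (2 * (n + 1)) 1 = ∑' x : G, convPow μ n x * convPow μ (n + 2) x := by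
    rw [show 2 * (n + 1) = n + (n + 2) by ring, ← convPow_pair h hsymm n (n + 2) 1]
    exact tsum_congr fun x => by rw [inv_one, one_mul]
  rw [e1, E_eq_sq h hsymm n, E_eq_sq h hsymm (n + 2)]
  exact tsum_inner_sq_le _ _ (summable_sq h n) (summable_sq h (n + 2))

lemma E1_mul_le (h : IsProb μ) (hsymm : MeasSymm μ) (n : ℕ) :
    convPow μ (2 * 1) 1 * convPow μ (2 * n) 1 ≤ convPow μ (2 * (n + 1)) 1 := by
  induction n with
  | zero =>
    have e : convPow μ (2 * 0) 1 = 1 := by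
      show (if (1 : G) = 1 then (1:ℝ) else 0) = 1
      simp
    rw [e, mul_one]
  | succ n ih =>
    have h1 := E_logconvex h hsymm n
    have p0 := E_pos h hsymm n
    have p1 := E_pos h hsymm (n + 1)
    have t1 : convPow μ (2*1) 1 * convPow μ (2*n) 1 * convPow μ (2*(n+1)) 1
        ≤ convPow μ (2*(n+1)) 1 ^ 2 := by nlinarith
    have t2 : convPow μ (2*n) 1 * (convPow μ (2*1) 1 * convPow μ (2*(n+1)) 1)
        ≤ convPow μ (2*n) 1 * convPow μ (2*(n+2)) 1 := by nlinarith
    have := le_of_mul_le_mul_left t2 p0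
    exact this.trans_eq (by norm_num)

lemma E_pow_le (h : IsProb μ) (hsymm : MeasSymm μ) (n b : ℕ) :
    convPow μ (2 * 1) 1 ^ b * convPow μ (2 * n) 1 ≤ convPow μ (2 * (n + b)) 1 := by
  induction b with
  | zero => simp
  | succ b ih =>
    have e1pos := E_pos h hsymm 1
    calc convPow μ (2*1) 1 ^ (b+1) * convPow μ (2*n) 1
        = convPow μ (2*1) 1 * (convPow μ (2*1) 1 ^ b * convPow μ (2*n) 1) := by ring
      _ ≤ convPow μ (2*1) 1 * convPow μ (2*(n+b)) 1 :=
          mul_le_mul_of_nonneg_left ih e1pos.le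
      _ ≤ convPow μ (2*((n+b)+1)) 1 := E1_mul_le h hsymm (n + b)
      _ = convPow μ (2*(n+(b+1))) 1 := by ring_nf

lemma supermult (h : IsProb μ) (hsymm : MeasSymm μ) (a b : ℕ) :
    convPow μ a 1 * convPow μ b 1 ≤ convPow μ (a + b) 1 := by
  rw [← convPow_pair h hsymm a b 1]
  have := Summable.le_tsum (summable_pair h a b 1) 1
    (fun j _ => mul_nonneg (convPow_nonneg h a _) (convPow_nonneg h b _))
  simpa using this

end Analytic

section Aper
variable {G : Type*} [Group G] {μ : G → ℝ}

lemma exists_odd_return (h : IsProb μ) (hsymm : MeasSymm μ) (haper : IsAperiodic μ) :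
    ∃ s : ℕ, Odd s ∧ 0 < convPow μ s 1 := by
  by_contra hc
  push_neg at hc
  have h2 : (2 : ℕ) = 1 := haper 2 (by
    intro n hn hpos
    rcases Nat.even_or_odd n with he | ho
    · exact he.two_dvd
    · exact absurd hpos (not_lt.mpr (hc n ho)))
  norm_num at h2

/-- For every `j ≥ 1`, eventually `μ^{2n+j}(e) ≥ c μ^{2n}(e)`. -/
lemma ratio_lower (h : IsProb μ) (hsymm : MeasSymm μ) (haper : IsAperiodic μ)
    {j : ℕ} (hj : 1 ≤ j) :
    ∃ c : ℝ, 0 < c ∧ ∃ N : ℕ, ∀ n ≥ N,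
      c * convPow μ (2 * n) 1 ≤ convPow μ (2 * n + j) 1 := by
  obtain ⟨s, hsodd, hspos⟩ := exists_odd_return h hsymm haper
  rcases Nat.even_or_odd j with hje | hjo
  · refine ⟨convPow μ j 1, ?_, 0, fun n _ => ?_⟩
    · obtain ⟨m, hm⟩ := hje
      have := E_pos h hsymm m
      rwa [show 2 * m = j by omega] at this
    · calc convPow μ j 1 * convPow μ (2 * n) 1
          = convPow μ (2 * n) 1 * convPow μ j 1 := mul_comm _ _
        _ ≤ convPow μ (2 * n + j) 1 := supermult h hsymm _ _
  · -- j odd: use t = s + 2*j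
    have htpos : 0 < convPow μ (s + 2 * j) 1 :=
      lt_of_lt_of_le (mul_pos hspos (E_pos h hsymm j)) (supermult h hsymm s (2 * j))
    refine ⟨convPow μ (s + 2 * j) 1, htpos, s + j, fun n hn => ?_⟩
    obtain ⟨u, hu⟩ : ∃ u, s + j = 2 * u := by
      rcases hsodd with ⟨a, ha⟩; rcases hjo with ⟨b, hb⟩
      exact ⟨a + b + 1, by omega⟩
    have hun : u ≤ n := by omega
    have key : 2 * n + j = (s + 2 * j) + 2 * (n - u) := by omega
    calc convPow μ (s + 2*j) 1 * convPow μ (2 * n) 1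
        ≤ convPow μ (s + 2*j) 1 * convPow μ (2 * (n - u)) 1 :=
          mul_le_mul_of_nonneg_left (E_antitone h hsymm (Nat.sub_le n u)) htpos.le
      _ ≤ convPow μ ((s + 2*j) + 2 * (n - u)) 1 := supermult h hsymm _ _
      _ = convPow μ (2 * n + j) 1 := by rw [key]

end Aper

section Char
variable {G : Type*} [Group G]

lemma tendsto_parity {f : ℕ → ℝ} {l : ℝ} (he : Tendsto (fun n => f (2 * n)) atTop (𝓝 l))
    (ho : Tendsto (fun n => f (2 * n + 1)) atTop (𝓝 l)) : Tendsto f atTop (𝓝 l) := by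
  rw [Metric.tendsto_atTop] at he ho ⊢
  intro ε hε
  obtain ⟨N1, h1⟩ := he ε hε
  obtain ⟨N2, h2⟩ := ho ε hε
  refine ⟨2 * N1 + 2 * N2 + 2, fun n hn => ?_⟩
  rcases Nat.even_or_odd n with ⟨m, hm⟩ | ⟨m, hm⟩
  · have hn' : n = 2 * m := by omega
    rw [hn']
    exact h1 m (by omega)
  · have hn' : n = 2 * m + 1 := by omega
    rw [hn']
    exact h2 m (by omega)

lemma tendsto_mul_self (k : ℕ) (hk : 1 ≤ k) : Tendsto (fun n : ℕ => k * n) atTop atTop := by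
  apply tendsto_atTop_atTop_of_monotone (fun a b hab => Nat.mul_le_mul_left k hab)
  exact fun b => ⟨b, Nat.le_mul_of_pos_left b hk⟩

lemma tendsto_div_self (k : ℕ) (hk : 1 ≤ k) : Tendsto (fun n : ℕ => n / k) atTop atTop := by
  apply tendsto_atTop_atTop_of_monotone (fun a b hab => Nat.div_le_div_right hab)
  exact fun b => ⟨b * k, by rw [Nat.mul_div_cancel b hk]⟩

/-- Characterization of `Amu` via even-time ratios. -/
lemma amu_char (ν : G → ℝ) (h : IsProb ν) (hsymm : MeasSymm ν)
    (hodd : ∃ c : ℝ, 0 < c ∧ ∃ N : ℕ, ∀ n ≥ N,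
      c * convPow ν (2 * n) 1 ≤ convPow ν (2 * n + 1) 1) :
    Amu ν = {g | Tendsto (fun n => convPow ν (2 * n) g / convPow ν (2 * n) 1) atTop (𝓝 1)} := by
  ext g
  simp only [Amu, Set.mem_setOf_eq]
  constructor
  · intro hg
    exact hg.comp (tendsto_mul_self 2 one_le_two)
  · intro hg
    obtain ⟨c, hc, N, hcN⟩ := hodd
    set Q : ℕ → ℝ := fun n => ∑' x : G, (convPow ν n (g⁻¹ * x) - convPow ν n x) ^ 2 with hQ
    set E : ℕ → ℝ := fun n => convPow ν (2 * n) 1 with hE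
    have hEpos : ∀ n, 0 < E n := fun n => E_pos h hsymm n
    have hQE : ∀ n, Q n / E n = 2 - 2 * (convPow ν (2 * n) g / E n) := by
      intro n
      simp only [hQ, hE]
      rw [Q_eq h hsymm n g]
      have hne : convPow ν (2 * n) 1 ≠ 0 := ne_of_gt (E_pos h hsymm n)
      field_simp
    have hQtend : Tendsto (fun n => Q n / E n) atTop (𝓝 0) := by
      rw [tendsto_congr hQE]
      have : Tendsto (fun n => 2 - 2 * (convPow ν (2 * n) g / E n)) atTop (𝓝 (2 - 2 * 1)) :=
        tendsto_const_nhds.sub (hg.const_mul 2)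
      simpa using this
    apply tendsto_parity
    · exact hg
    · -- odd times
      have hQ1tend : Tendsto (fun n => (1 / c ^ 2) * (Q (n + 1) / E (n + 1))) atTop (𝓝 0) := by
        have := (hQtend.comp (tendsto_add_atTop_nat 1)).const_mul (1 / c ^ 2)
        simpa using this
      have hR : Tendsto (fun n => Real.sqrt ((1 / c ^ 2) * (Q (n + 1) / E (n + 1))))
          atTop (𝓝 0) := by
        have := hQ1tend.sqrt
        rwa [Real.sqrt_zero] at this
      rw [tendsto_iff_dist_tendsto_zero]
      apply squeeze_zero' (Eventually.of_forall fun n => dist_nonneg)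
        (eventually_atTop.mpr ⟨N, fun n hn => ?_⟩) hR
      -- the key bound
      have hden : 0 < convPow ν (2 * n + 1) 1 :=
        lt_of_lt_of_le (mul_pos hc (hEpos n)) (hcN n hn)
      have hnum : convPow ν (2 * n + 1) g - convPow ν (2 * n + 1) 1
          = ∑' x : G, convPow ν n x * (convPow ν (n + 1) (g⁻¹ * x) - convPow ν (n + 1) x) := by
        have hs1 := summable_pair h n (n + 1) g
        have hs2 := summable_pair h n (n + 1) 1
        have hs2' : Summable (fun x : G => convPow ν n x * convPow ν (n + 1) x) := by
          refine hs2.congr fun x => ?_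
          rw [inv_one, one_mul]
        rw [tsum_congr (fun x => mul_sub (convPow ν n x) (convPow ν (n + 1) (g⁻¹ * x))
          (convPow ν (n + 1) x)), Summable.tsum_sub hs1 hs2']
        have e1 : ∑' x : G, convPow ν n x * convPow ν (n + 1) (g⁻¹ * x)
            = convPow ν (2 * n + 1) g := by
          rw [convPow_pair h hsymm n (n + 1) g]; ring_nf
        have e2 : ∑' x : G, convPow ν n x * convPow ν (n + 1) x
            = convPow ν (2 * n + 1) 1 := by
          rw [show 2 * n + 1 = n + (n + 1) by omega, ← convPow_pair h hsymm n (n + 1) 1]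
          exact tsum_congr fun x => by rw [inv_one, one_mul]
        rw [e1, e2]
      have hcs : |convPow ν (2 * n + 1) g - convPow ν (2 * n + 1) 1|
          ≤ Real.sqrt (E n) * Real.sqrt (Q (n + 1)) := by
        rw [hnum]
        have := tsum_abs_inner_le (convPow ν n)
          (fun x => convPow ν (n + 1) (g⁻¹ * x) - convPow ν (n + 1) x)
          (summable_sq h n) (Dsq_summable h (n + 1) g)
        rwa [← E_eq_sq h hsymm n] at this
      -- final numeric bound
      rw [Real.dist_eq]
      have hsq : (convPow ν (2 * n + 1) g / convPow ν (2 * n + 1) 1 - 1) ^ 2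
          ≤ (1 / c ^ 2) * (Q (n + 1) / E (n + 1)) := by
        have hQnn : 0 ≤ Q (n + 1) := tsum_nonneg fun x => sq_nonneg _
        have hE1 : E (n + 1) ≤ E n := E_antitone h hsymm (Nat.le_succ n)
        have hE1pos := hEpos (n + 1)
        have hEnpos := hEpos n
        have hb : c * E n ≤ convPow ν (2 * n + 1) 1 := hcN n hn
        have hnum2 : (convPow ν (2 * n + 1) g - convPow ν (2 * n + 1) 1) ^ 2
            ≤ E n * Q (n + 1) := by
          have h2 : (convPow ν (2 * n + 1) g - convPow ν (2 * n + 1) 1) ^ 2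
              = |convPow ν (2 * n + 1) g - convPow ν (2 * n + 1) 1| ^ 2 := (sq_abs _).symm
          rw [h2]
          calc |convPow ν (2 * n + 1) g - convPow ν (2 * n + 1) 1| ^ 2
              ≤ (Real.sqrt (E n) * Real.sqrt (Q (n + 1))) ^ 2 :=
                pow_le_pow_left₀ (abs_nonneg _) hcs 2
            _ = E n * Q (n + 1) := by
                rw [mul_pow, Real.sq_sqrt (hEpos n).le, Real.sq_sqrt hQnn]
        have e3 : convPow ν (2 * n + 1) g / convPow ν (2 * n + 1) 1 - 1
            = (convPow ν (2 * n + 1) g - convPow ν (2 * n + 1) 1) / convPow ν (2 * n + 1) 1 := by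
          field_simp
        rw [e3, div_pow, div_le_iff₀ (by positivity)]
        have hden2 : c ^ 2 * (E n * E n) ≤ convPow ν (2 * n + 1) 1 ^ 2 := by
          nlinarith [mul_le_mul hb hb (by positivity : (0:ℝ) ≤ c * E n) hden.le]
        calc (convPow ν (2 * n + 1) g - convPow ν (2 * n + 1) 1) ^ 2
            ≤ E n * Q (n + 1) := hnum2
          _ ≤ (1 / c ^ 2) * (Q (n + 1) / E (n + 1)) * (c ^ 2 * (E n * E (n + 1))) := by
              rw [show (1 / c ^ 2) * (Q (n + 1) / E (n + 1)) * (c ^ 2 * (E n * E (n + 1)))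
                  = Q (n + 1) * E n * ((c ^ 2 / c ^ 2) * (E (n + 1) / E (n + 1))) by ring]
              rw [div_self (by positivity), div_self (ne_of_gt hE1pos)]
              ring_nf
              exact le_refl _
          _ ≤ (1 / c ^ 2) * (Q (n + 1) / E (n + 1)) * convPow ν (2 * n + 1) 1 ^ 2 := by
              apply mul_le_mul_of_nonneg_left _ (by positivity)
              have haux : c ^ 2 * E n * E (n + 1) ≤ c ^ 2 * E n * E n :=
                mul_le_mul_of_nonneg_left hE1 (by positivity)
              nlinarith
      calc |convPow ν (2 * n + 1) g / convPow ν (2 * n + 1) 1 - 1|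
          = Real.sqrt ((convPow ν (2 * n + 1) g / convPow ν (2 * n + 1) 1 - 1) ^ 2) := by
            rw [Real.sqrt_sq_eq_abs]
        _ ≤ Real.sqrt ((1 / c ^ 2) * (Q (n + 1) / E (n + 1))) := Real.sqrt_le_sqrt hsq

end Char

theorem stmt4 {G : Type*} [Group G] [Group.FG G] (μ : G → ℝ)
    (hprob : IsProb μ) (hsymm : MeasSymm μ) (haper : IsAperiodic μ)
    (hgen : GeneratingSupport μ) :
    ∀ k : ℕ, 1 ≤ k → Amu μ = Amu (convPow μ k) := by
  intro k hk
  have hν : IsProb (convPow μ k) := isProb_convPow hprob k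
  have hνs : MeasSymm (convPow μ k) := convPow_symm hprob hsymm k
  have hpow : ∀ n : ℕ, convPow (convPow μ k) n = convPow μ (k * n) := by
    intro n
    induction n with
    | zero =>
      rw [Nat.mul_zero]
      rfl
    | succ n ih =>
      show conv (convPow (convPow μ k) n) (convPow μ k) = _
      rw [ih, show k * (n + 1) = k * n + k by ring, convPow_add hprob]
  have hoddμ := ratio_lower hprob hsymm haper (le_refl 1)
  have hoddν : ∃ c : ℝ, 0 < c ∧ ∃ N : ℕ, ∀ n ≥ N,
      c * convPow (convPow μ k) (2 * n) 1 ≤ convPow (convPow μ k) (2 * n + 1) 1 := by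
    obtain ⟨c, hc, N, hcN⟩ := ratio_lower hprob hsymm haper hk
    refine ⟨c, hc, N, fun n hn => ?_⟩
    rw [hpow, hpow, show k * (2 * n) = 2 * (k * n) by ring,
      show k * (2 * n + 1) = 2 * (k * n) + k by ring]
    exact hcN (k * n) (le_trans hn (Nat.le_mul_of_pos_left n hk))
  rw [amu_char μ hprob hsymm hoddμ, amu_char (convPow μ k) hν hνs hoddν]
  ext g
  simp only [Set.mem_setOf_eq]
  have hEpos : ∀ m : ℕ, 0 < convPow μ (2 * m) 1 := E_pos hprob hsymm
  constructor
  · intro hg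
    have hgk := hg.comp (tendsto_mul_self k hk)
    apply Tendsto.congr (fun n => ?_) hgk
    show convPow μ (2 * (k * n)) g / convPow μ (2 * (k * n)) 1 = _
    rw [hpow (2 * n), show k * (2 * n) = 2 * (k * n) by ring]
  · intro hg
    have hg' : Tendsto (fun n => convPow μ (2 * (k * n)) g / convPow μ (2 * (k * n)) 1)
        atTop (𝓝 1) := by
      apply Tendsto.congr (fun n => ?_) hg
      rw [hpow (2 * n), show k * (2 * n) = 2 * (k * n) by ring]
    set Q : ℕ → ℝ := fun n => ∑' x : G, (convPow μ n (g⁻¹ * x) - convPow μ n x) ^ 2 with hQdef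
    have hQnn : ∀ m : ℕ, 0 ≤ Q m := fun m => tsum_nonneg fun x => sq_nonneg _
    have hQE : ∀ m : ℕ, Q m / convPow μ (2 * m) 1
        = 2 - 2 * (convPow μ (2 * m) g / convPow μ (2 * m) 1) := by
      intro m
      simp only [hQdef]
      rw [Q_eq hprob hsymm m g]
      have hne : convPow μ (2 * m) 1 ≠ 0 := ne_of_gt (hEpos m)
      field_simp
    have hQk : Tendsto (fun n => Q (k * n) / convPow μ (2 * (k * n)) 1) atTop (𝓝 0) := by
      rw [tendsto_congr (fun n => hQE (k * n))]
      have : Tendsto (fun n => 2 - 2 * (convPow μ (2 * (k * n)) g / convPow μ (2 * (k * n)) 1))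
          atTop (𝓝 (2 - 2 * 1)) := tendsto_const_nhds.sub (hg'.const_mul 2)
      simpa using this
    have hE0 : convPow μ (2 * 0) 1 = 1 := by
      show (if (1 : G) = 1 then (1 : ℝ) else 0) = 1
      simp
    have hE1le : convPow μ (2 * 1) 1 ≤ 1 := by
      have := E_antitone hprob hsymm (Nat.zero_le 1)
      rwa [hE0] at this
    have hE1pos : 0 < convPow μ (2 * 1) 1 := hEpos 1
    have key : ∀ m : ℕ, Q m / convPow μ (2 * m) 1
        ≤ (1 / convPow μ (2 * 1) 1 ^ k) * (Q (k * (m / k)) / convPow μ (2 * (k * (m / k))) 1) := by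
      intro m
      set n := m / k with hn
      have h1 : k * n ≤ m := by
        rw [hn, mul_comm]
        exact Nat.div_mul_le_self m k
      have h3 : m % k < k := Nat.mod_lt m hk
      have h4 : k * n + m % k = m := by rw [hn]; exact Nat.div_add_mod m k
      have h2 : m ≤ k * n + k := by
        rw [← h4]
        exact Nat.add_le_add_left h3.le _
      have hQle : Q m ≤ Q (k * n) := Q_antitone hprob g h1
      have hEge : convPow μ (2 * 1) 1 ^ k * convPow μ (2 * (k * n)) 1 ≤ convPow μ (2 * m) 1 := by
        have hb := E_pow_le hprob hsymm (k * n) (m - k * n)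
        rw [Nat.add_sub_cancel' h1] at hb
        refine le_trans ?_ hb
        apply mul_le_mul_of_nonneg_right _ (hEpos (k * n)).le
        refine pow_le_pow_of_le_one hE1pos.le hE1le (Nat.sub_le_of_le_add ?_)
        rw [Nat.add_comm]
        exact h2
      calc Q m / convPow μ (2 * m) 1
          ≤ Q (k * n) / (convPow μ (2 * 1) 1 ^ k * convPow μ (2 * (k * n)) 1) :=
            div_le_div₀ (hQnn (k * n)) hQle (mul_pos (pow_pos hE1pos k) (hEpos (k * n))) hEge
        _ = (1 / convPow μ (2 * 1) 1 ^ k) * (Q (k * n) / convPow μ (2 * (k * n)) 1) := by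
            rw [div_mul_div_comm, one_mul]
    have hcomp : Tendsto (fun m => Q (k * (m / k)) / convPow μ (2 * (k * (m / k))) 1)
        atTop (𝓝 0) := hQk.comp (tendsto_div_self k hk)
    have hbound : Tendsto (fun m => Q m / convPow μ (2 * m) 1) atTop (𝓝 0) := by
      apply squeeze_zero (fun m => div_nonneg (hQnn m) (hEpos m).le) key
      have := hcomp.const_mul (1 / convPow μ (2 * 1) 1 ^ k)
      simpa using this
    have hfin : ∀ m : ℕ, convPow μ (2 * m) g / convPow μ (2 * m) 1
        = 1 - (Q m / convPow μ (2 * m) 1) / 2 := by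
      intro m
      rw [hQE m]
      ring
    rw [tendsto_congr hfin]
    have h5 : Tendsto (fun m => (1:ℝ) - Q m / convPow μ (2 * m) 1 / 2) atTop (𝓝 (1 - 0 / 2)) :=
      tendsto_const_nhds.sub (hbound.div_const 2)
    simpa using h5
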